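/- Let X = [a,b] ⊂ ℝ with K > |a| > 0, and for x¹,…,xʳ ∈ Xⁿ define F(x¹,…,xʳ) = ∏_{i=1}^{n} (min{x¹ᵢ,…,xʳᵢ} + K)/(max{x¹ᵢ,…,xʳᵢ} + K). Then F satisfies the triangle-type inequality F(x¹,x²,…,xʳ) ≥ F(x¹,h,…,h) · F(h,x²,…,xʳ) for every h ∈ Xⁿ. -/

import Mathlib

/-- The Morillas-type stationary fuzzy measure on `r`-tuples of points of `ℝⁿ`:
`F(x¹,…,xʳ) = ∏_{i=1}^{n} (min_j xʲᵢ + K)/(max_j xʲᵢ + K)`. -/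
noncomputable def morillasF (K : ℝ) (n r : ℕ) (hr : 0 < r)
    (y : Fin r → Fin n → ℝ) : ℝ :=
  ∏ i : Fin n,
    ((Finset.univ.inf' ⟨⟨0, hr⟩, Finset.mem_univ _⟩ fun j => y j i) + K) /
    ((Finset.univ.sup' ⟨⟨0, hr⟩, Finset.mem_univ _⟩ fun j => y j i) + K)

private lemma key_ineq (u v p q c d : ℝ) (hu : 0 < u) (hv : 0 < v) (hp : 0 < p)
    (hq : 0 < q) (hc : 0 < c) (hd : 0 < d)
    (h1 : p ≤ v) (h2 : min u p ≤ c) (h3 : v ≤ q) (h4 : d ≤ max u q) :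
    (min u v) / (max u v) * (p / q) ≤ c / d := by
  rw [div_mul_div_comm, div_le_div_iff₀ (by positivity) hd]
  have hA : min u v * p ≤ v * c := by
    rcases le_total u v with huv | huv
    · rw [min_eq_left huv]
      rcases le_total u p with hup | hup
      · rw [min_eq_left hup] at h2
        nlinarith
      · rw [min_eq_right hup] at h2
        nlinarith
    · rw [min_eq_right huv]
      have hup : p ≤ u := le_trans h1 huv
      rw [min_eq_right hup] at h2
      nlinarith
  have hB : v * d ≤ max u v * q := by
    rcases le_total u v with huv | huv
    · rw [max_eq_right huv]
      rw [max_eq_right (le_trans huv h3)] at h4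
      nlinarith
    · rw [max_eq_left huv]
      rcases le_total u q with huq | huq
      · rw [max_eq_right huq] at h4
        nlinarith
      · rw [max_eq_left huq] at h4
        nlinarith
  nlinarith [mul_pos hv hc, mul_pos hv hd]

private lemma min_add_K (s t K : ℝ) : min s t + K = min (s + K) (t + K) := by
  rcases le_total s t with hle | hle <;>
    simp [min_eq_left, min_eq_right, hle, add_le_add_iff_right]

private lemma max_add_K (s t K : ℝ) : max s t + K = max (s + K) (t + K) := by
  rcases le_total s t with hle | hle <;>
    simp [max_eq_left, max_eq_right, hle, add_le_add_iff_right]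

/-- for `X = [a,b]` with `K > |a| > 0`, the function
`F(x¹,…,xʳ) = ∏ᵢ (min + K)/(max + K)` satisfies the triangle-type inequality
`F(x¹,x²,…,xʳ) ≥ F(x¹,h,…,h) · F(h,x²,…,xʳ)` for every `h ∈ Xⁿ`. -/
theorem stmt5 (a b K : ℝ) (haK : |a| < K) (ha : 0 < |a|) (n r : ℕ) (hr : 3 ≤ r)
    (x : Fin r → Fin n → ℝ) (h : Fin n → ℝ)
    (hx : ∀ j i, x j i ∈ Set.Icc a b) (hh : ∀ i, h i ∈ Set.Icc a b) :
    morillasF K n r (by omega) (fun j => if j.val = 0 then x ⟨0, by omega⟩ else h)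
      * morillasF K n r (by omega) (Function.update x ⟨0, by omega⟩ h)
      ≤ morillasF K n r (by omega) x := by
  have hrpos : 0 < r := by omega
  have haK' : 0 < a + K := by
    have := neg_abs_le a; linarith
  have hposx : ∀ j i, 0 < x j i + K := fun j i => by
    have := (hx j i).1; linarith
  have hposh : ∀ i, 0 < h i + K := fun i => by
    have := (hh i).1; linarith
  unfold morillasF
  rw [← Finset.prod_mul_distrib]
  have hne : (Finset.univ : Finset (Fin r)).Nonempty :=
    ⟨⟨0, hrpos⟩, Finset.mem_univ _⟩
  set z0 : Fin r := ⟨0, hrpos⟩ with hz0def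
  set z1 : Fin r := ⟨1, by omega⟩ with hz1def
  apply Finset.prod_le_prod
  · -- nonnegativity of each factor of the LHS
    intro i _
    have h1 : a ≤ Finset.univ.inf' hne fun j => (if j.val = 0 then x z0 else h) i :=
      Finset.le_inf' _ _ fun j _ => by
        by_cases hj : j.val = 0 <;> simp [hj, (hx z0 i).1, (hh i).1]
    have h2 : a ≤ Finset.univ.sup' hne fun j => (if j.val = 0 then x z0 else h) i := by
      refine le_trans (hx z0 i).1 (le_trans ?_
        (Finset.le_sup' (fun j => (if j.val = 0 then x z0 else h) i) (Finset.mem_univ z0)))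
      simp [hz0def]
    have h3 : a ≤ Finset.univ.inf' hne fun j => Function.update x z0 h j i :=
      Finset.le_inf' _ _ fun j _ => by
        by_cases hj : j = z0
        · simp [hj, (hh i).1]
        · simp [Function.update_of_ne hj, (hx j i).1]
    have h4 : a ≤ Finset.univ.sup' hne fun j => Function.update x z0 h j i := by
      refine le_trans (hh i).1 (le_trans ?_
        (Finset.le_sup' (fun j => Function.update x z0 h j i) (Finset.mem_univ z0)))
      simp
    have p1 := lt_of_lt_of_le haK' (add_le_add_left h1 K)
    have p2 := lt_of_lt_of_le haK' (add_le_add_left h2 K)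
    have p3 := lt_of_lt_of_le haK' (add_le_add_left h3 K)
    have p4 := lt_of_lt_of_le haK' (add_le_add_left h4 K)
    exact mul_nonneg (div_nonneg p1.le p2.le) (div_nonneg p3.le p4.le)
  · intro i _
    -- compute inf'/sup' of the first tuple
    have e1 : (Finset.univ.inf' hne fun j => (if j.val = 0 then x z0 else h) i)
        = min (x z0 i) (h i) := by
      apply le_antisymm
      · apply le_min
        · have := Finset.inf'_le (fun j : Fin r => (if j.val = 0 then x z0 else h) i)
            (Finset.mem_univ z0)
          simpa [hz0def, -Finset.inf'_le_iff, -Finset.le_sup'_iff] using this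
        · have := Finset.inf'_le (fun j : Fin r => (if j.val = 0 then x z0 else h) i)
            (Finset.mem_univ z1)
          simpa [hz1def, -Finset.inf'_le_iff, -Finset.le_sup'_iff] using this
      · exact Finset.le_inf' _ _ fun j _ => by
          by_cases hj : j.val = 0 <;> simp [hj, min_le_left, min_le_right]
    have e2 : (Finset.univ.sup' hne fun j => (if j.val = 0 then x z0 else h) i)
        = max (x z0 i) (h i) := by
      apply le_antisymm
      · exact Finset.sup'_le _ _ fun j _ => by
          by_cases hj : j.val = 0 <;> simp [hj, le_max_left, le_max_right]
      · apply max_le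
        · have := Finset.le_sup' (fun j : Fin r => (if j.val = 0 then x z0 else h) i)
            (Finset.mem_univ z0)
          simpa [hz0def, -Finset.inf'_le_iff, -Finset.le_sup'_iff] using this
        · have := Finset.le_sup' (fun j : Fin r => (if j.val = 0 then x z0 else h) i)
            (Finset.mem_univ z1)
          simpa [hz1def, -Finset.inf'_le_iff, -Finset.le_sup'_iff] using this
    rw [e1, e2]
    -- facts about the second tuple
    have f1 : (Finset.univ.inf' hne fun j => Function.update x z0 h j i) ≤ h i := by
      have := Finset.inf'_le (fun j : Fin r => Function.update x z0 h j i)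
        (Finset.mem_univ z0)
      simpa [-Finset.inf'_le_iff, -Finset.le_sup'_iff] using this
    have f2 : min (x z0 i) (Finset.univ.inf' hne fun j => Function.update x z0 h j i)
        ≤ Finset.univ.inf' hne fun j => x j i := by
      refine Finset.le_inf' _ _ fun j _ => ?_
      by_cases hj : j = z0
      · subst hj; exact min_le_left _ _
      · refine le_trans (min_le_right _ _) ?_
        have := Finset.inf'_le (fun j : Fin r => Function.update x z0 h j i)
          (Finset.mem_univ j)
        simpa [Function.update_of_ne hj, -Finset.inf'_le_iff, -Finset.le_sup'_iff] using this
    have f3 : h i ≤ Finset.univ.sup' hne fun j => Function.update x z0 h j i := by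
      have := Finset.le_sup' (fun j : Fin r => Function.update x z0 h j i)
        (Finset.mem_univ z0)
      simpa [-Finset.inf'_le_iff, -Finset.le_sup'_iff] using this
    have f4 : (Finset.univ.sup' hne fun j => x j i)
        ≤ max (x z0 i) (Finset.univ.sup' hne fun j => Function.update x z0 h j i) := by
      refine Finset.sup'_le _ _ fun j _ => ?_
      by_cases hj : j = z0
      · subst hj; exact le_max_left _ _
      · refine le_trans ?_ (le_max_right _ _)
        have := Finset.le_sup' (fun j : Fin r => Function.update x z0 h j i)
          (Finset.mem_univ j)
        simpa [Function.update_of_ne hj, -Finset.inf'_le_iff, -Finset.le_sup'_iff] using this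
    -- positivity facts
    have g1 : a ≤ Finset.univ.inf' hne fun j => Function.update x z0 h j i :=
      Finset.le_inf' _ _ fun j _ => by
        by_cases hj : j = z0
        · simp [hj, (hh i).1]
        · simp [Function.update_of_ne hj, (hx j i).1]
    have g2 : a ≤ Finset.univ.inf' hne fun j => x j i :=
      Finset.le_inf' _ _ fun j _ => (hx j i).1
    have g3 : x z0 i ≤ Finset.univ.sup' hne fun j => x j i :=
      Finset.le_sup' (fun j : Fin r => x j i) (Finset.mem_univ z0)
    set m2 := Finset.univ.inf' hne fun j => Function.update x z0 h j i with hm2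
    set M2 := Finset.univ.sup' hne fun j => Function.update x z0 h j i with hM2
    set m := Finset.univ.inf' hne fun j => x j i with hm
    set M := Finset.univ.sup' hne fun j => x j i with hM
    have hm2K : 0 < m2 + K := lt_of_lt_of_le haK' (add_le_add_left g1 K)
    have hM2K : 0 < M2 + K := lt_of_lt_of_le (hposh i) (add_le_add_left f3 K)
    have hmK : 0 < m + K := lt_of_lt_of_le haK' (add_le_add_left g2 K)
    have hMK : 0 < M + K := lt_of_lt_of_le (hposx z0 i) (add_le_add_left g3 K)
    rw [min_add_K, max_add_K]
    apply key_ineq (x z0 i + K) (h i + K) (m2 + K) (M2 + K) (m + K) (M + K)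
      (hposx z0 i) (hposh i) hm2K hM2K hmK hMK
    · linarith
    · rw [← min_add_K]; exact add_le_add_left f2 K
    · linarith
    · rw [← max_add_K]; exact add_le_add_left f4 K
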